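/- For all optimisers a and b and every result vector R ∈ {0,1}^n, the probability that a produces R under the uniform NIAH distribution equals the probability that b produces R: (u_NIAH)_a(R) = (u_NIAH)_b(R). In other words, NFL holds for the uniform needle-in-a-haystack problem. -/

import Mathlib

namespace NFL

/-- A (deterministic) optimiser on search space `Fin n` and range `Y`:
it assigns to every trace (list of pairs with pairwise distinct first
components) of length `< n` a next, unvisited search point. -/
structure Optimiser (n : ℕ) (Y : Type*) where
  next : List (Fin n × Y) → Fin n
  valid : ∀ T : List (Fin n × Y), T.length < n → (T.map Prod.fst).Nodup →
    next T ∉ T.map Prod.fst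

variable {n : ℕ} {Y : Type*}

/-- The trace generated after `k` steps by running optimiser `a`
on target function `f`, starting from the empty trace. -/
def runFrom (a : Optimiser n Y) (f : Fin n → Y) : ℕ → List (Fin n × Y)
  | 0 => []
  | k + 1 =>
      runFrom a f k ++ [(a.next (runFrom a f k), f (a.next (runFrom a f k)))]

/-- The result vector `T^y(a,f)`: its `i`-th entry (0-indexed) is the value
observed at step `i+1`, i.e. `f` applied to the point probed after `i` steps. -/
def resVec (a : Optimiser n Y) (f : Fin n → Y) (i : Fin n) : Y :=
  f (a.next (runFrom a f (i : ℕ)))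

/-- A problem distribution: a probability distribution on `Y^X`. -/
def IsProbDist [Fintype Y] (P : (Fin n → Y) → ℝ) : Prop :=
  (∀ f, 0 ≤ P f) ∧ ∑ f, P f = 1

/-- `P_a(R)`: the probability that optimiser `a` produces result vector `R`. -/
def resProb [Fintype Y] [DecidableEq Y] (P : (Fin n → Y) → ℝ)
    (a : Optimiser n Y) (R : Fin n → Y) : ℝ :=
  ∑ f ∈ Finset.univ.filter (fun f => resVec a f = R), P f

/-- Expected performance `M^P(a)` of optimiser `a` under distribution `P`
and performance measure `M`. -/
def perf [Fintype Y] (P : (Fin n → Y) → ℝ) (M : (Fin n → Y) → ℝ)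
    (a : Optimiser n Y) : ℝ :=
  ∑ f, P f * M (resVec a f)

/-- NFL holds for `P`: all optimisers have the same expected performance
under every (nonnegative) performance measure. -/
def NFLholds [Fintype Y] (P : (Fin n → Y) → ℝ) : Prop :=
  ∀ M : (Fin n → Y) → ℝ, (∀ R, 0 ≤ M R) →
    ∀ a b : Optimiser n Y, perf P M a = perf P M b

/-- The histogram of `f`: `h_f(y) = |f⁻¹(y)|`. -/
def histogram [DecidableEq Y] (f : Fin n → Y) (y : Y) : ℕ :=
  (Finset.univ.filter fun x => f x = y).card

/-- `P` is block uniform: functions with equal histograms get equal probability. -/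
def BlockUniform [DecidableEq Y] (P : (Fin n → Y) → ℝ) : Prop :=
  ∀ f g : Fin n → Y, histogram f = histogram g → P f = P g

/-- `F` is closed under permutation: `f ∈ F` implies `σf ∈ F`,
where `(σf)(x) = f(σ⁻¹(x))`. -/
def Cup [Fintype Y] [DecidableEq Y] (F : Finset (Fin n → Y)) : Prop :=
  ∀ f ∈ F, ∀ σ : Equiv.Perm (Fin n), (f ∘ σ.symm) ∈ F

/-- The uniform distribution on a class `F`. -/
noncomputable def uniformOn [Fintype Y] [DecidableEq Y] (F : Finset (Fin n → Y))
    (f : Fin n → Y) : ℝ :=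
  if f ∈ F then 1 / F.card else 0

/-- An optimiser is non-adaptive if it probes the points of `X` in a fixed
order, regardless of the observed values. -/
def NonAdaptive (a : Optimiser n Y) : Prop :=
  ∃ ord : Fin n → Fin n,
    ∀ (f : Fin n → Y) (i : Fin n), a.next (runFrom a f (i : ℕ)) = ord i

/-- Optimisation time `M_ptm(R)`: the least index `i` (counting from 1) with
`R[i] = yMax`, with the convention `M_ptm(R) = n` if no such index exists. -/
def mptm [DecidableEq Y] (yMax : Y) (R : Fin n → Y) : ℕ :=
  if h : ∃ i, R i = yMax then
    ((Finset.univ.filter fun i => R i = yMax).min'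
      ⟨h.choose, Finset.mem_filter.mpr ⟨Finset.mem_univ _, h.choose_spec⟩⟩).val + 1
  else n

def probe (a : Optimiser n Y) (f : Fin n → Y) (k : ℕ) : Fin n :=
  a.next (runFrom a f k)

lemma runFrom_succ (a : Optimiser n Y) (f : Fin n → Y) (k : ℕ) :
    runFrom a f (k+1) = runFrom a f k ++ [(probe a f k, f (probe a f k))] := rfl

lemma runFrom_length (a : Optimiser n Y) (f : Fin n → Y) (k : ℕ) :
    (runFrom a f k).length = k := by
  induction k with
  | zero => rfl
  | succ k ih => simp [runFrom_succ, ih]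

lemma mem_runFrom_fst (a : Optimiser n Y) (f : Fin n → Y) (k : ℕ) (x : Fin n) :
    x ∈ (runFrom a f k).map Prod.fst ↔ ∃ j < k, probe a f j = x := by
  induction k with
  | zero => simp [runFrom]
  | succ k ih =>
    simp only [runFrom_succ, List.map_append, List.mem_append, ih]
    simp [Nat.lt_succ_iff_lt_or_eq, Nat.le_iff_lt_or_eq, or_and_right, exists_or, eq_comm]

lemma runFrom_fst_nodup (a : Optimiser n Y) (f : Fin n → Y) {k : ℕ} (hk : k ≤ n) :
    ((runFrom a f k).map Prod.fst).Nodup := by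
  induction k with
  | zero => simp [runFrom]
  | succ k ih =>
    have hk' : k < n := hk
    have h1 := ih hk'.le
    have h2 := a.valid (runFrom a f k) (by rw [runFrom_length]; exact hk') h1
    simp only [runFrom_succ, List.map_append]
    simp only [List.nodup_append, h1, true_and]
    refine ⟨List.nodup_singleton _, ?_⟩
    intro p hp q hq
    simp only [List.map_singleton, List.mem_singleton] at hq
    subst hq
    intro heq
    rw [heq] at hp
    exact h2 hp

lemma probe_not_mem (a : Optimiser n Y) (f : Fin n → Y) {k : ℕ} (hk : k < n) :
    probe a f k ∉ (runFrom a f k).map Prod.fst :=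
  a.valid _ (by rw [runFrom_length]; exact hk) (runFrom_fst_nodup a f hk.le)

lemma probe_ne (a : Optimiser n Y) (f : Fin n → Y) {i j : ℕ} (hij : i < j) (hj : j < n) :
    probe a f i ≠ probe a f j := by
  intro h
  exact probe_not_mem a f hj ((mem_runFrom_fst a f j _).2 ⟨i, hij, h⟩)

lemma runFrom_congr (a : Optimiser n Y) (f g : Fin n → Y) (k : ℕ)
    (h : ∀ j < k, f (probe a g j) = g (probe a g j)) :
    runFrom a f k = runFrom a g k := by
  induction k with
  | zero => rfl
  | succ k ih =>
    have hr : runFrom a f k = runFrom a g k := ih fun j hj => h j (hj.trans (Nat.lt_succ_self k))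
    have hp : probe a f k = probe a g k := by unfold probe; rw [hr]
    rw [runFrom_succ, runFrom_succ, hr, hp, h k (Nat.lt_succ_self k)]

section BoolPart
variable {n : ℕ}

def needle (x : Fin n) : Fin n → Bool := fun z => decide (z = x)

lemma card_filter_needle (x : Fin n) :
    (Finset.univ.filter fun z => needle x z = true).card = 1 := by
  simp [needle, Finset.filter_eq']

lemma needle_of_card {f : Fin n → Bool}
    (h : (Finset.univ.filter fun z => f z = true).card = 1) : ∃ x, f = needle x := by
  obtain ⟨x, hx⟩ := Finset.card_eq_one.1 h
  refine ⟨x, funext fun z => ?_⟩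
  have hz : f z = true ↔ z = x := by
    constructor
    · intro h1
      have : z ∈ Finset.univ.filter fun z => f z = true := by simp [h1]
      rw [hx] at this; simpa using this
    · intro h1
      subst h1
      have : z ∈ ({z} : Finset (Fin n)) := by simp
      rw [← hx] at this; simpa using this
  by_cases h1 : z = x
  · subst h1; simp [needle, hz.2 rfl]
  · simp only [needle, decide_eq_false h1]
    cases hf : f z
    · rfl
    · exact absurd (hz.1 hf) h1

lemma needle_inj {x y : Fin n} (h : needle x = needle y) : x = y := by
  have := congrFun h x
  simpa [needle] using this

/-- The fixed probe sequence on the all-false function. -/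
def zrun (a : Optimiser n Bool) (k : Fin n) : Fin n :=
  probe a (fun _ => false) (k : ℕ)

lemma zrun_inj (a : Optimiser n Bool) : Function.Injective (zrun a) := by
  intro i j h
  by_contra hne
  rcases lt_or_gt_of_ne hne with hlt | hlt
  · exact probe_ne a _ (show (i:ℕ) < (j:ℕ) from hlt) j.isLt h
  · exact probe_ne a _ (show (j:ℕ) < (i:ℕ) from hlt) i.isLt h.symm

lemma zrun_surj (a : Optimiser n Bool) : Function.Surjective (zrun a) :=
  Finite.surjective_of_injective (zrun_inj a)

lemma resVec_needle (a : Optimiser n Bool) (k : Fin n) :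
    resVec a (needle (zrun a k)) = needle k := by
  set f := needle (zrun a k) with hf
  have hagree : ∀ m : ℕ, m ≤ (k:ℕ) → runFrom a f m = runFrom a (fun _ => false) m := by
    intro m hm
    apply runFrom_congr
    intro j hj
    have hjk : j < (k:ℕ) := lt_of_lt_of_le hj hm
    have hne : probe a (fun _ => false) j ≠ zrun a k :=
      probe_ne a _ hjk k.isLt
    simp [hf, needle, hne]
  have hpk : probe a f (k:ℕ) = zrun a k := by
    unfold probe zrun probe
    rw [hagree _ le_rfl]
  funext i
  rcases lt_trichotomy i k with hik | hik | hik
  · -- i < k : value false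
    have hri : runFrom a f (i:ℕ) = runFrom a (fun _ => false) (i:ℕ) :=
      hagree _ (le_of_lt hik)
    have hne : probe a (fun _ => false) (i:ℕ) ≠ zrun a k :=
      probe_ne a _ (show (i:ℕ) < (k:ℕ) from hik) k.isLt
    show f (probe a f (i:ℕ)) = needle k i
    have : probe a f (i:ℕ) = probe a (fun _ => false) (i:ℕ) := by
      unfold probe; rw [hri]
    rw [this]
    simp [hf, needle, hne, Fin.ne_of_lt hik]
  · subst hik
    show f (probe a f (i:ℕ)) = needle i i
    rw [hpk]
    simp [hf, needle]
  · -- i > k : needle already found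
    have hmem : zrun a k ∈ (runFrom a f (i:ℕ)).map Prod.fst :=
      (mem_runFrom_fst a f _ _).2 ⟨(k:ℕ), hik, hpk⟩
    have hne : probe a f (i:ℕ) ≠ zrun a k := by
      intro h
      exact probe_not_mem a f i.isLt (h ▸ hmem)
    show f (probe a f (i:ℕ)) = needle k i
    simp [hf, needle, hne, (Fin.ne_of_lt hik).symm]
    exact hne

lemma key_card (a : Optimiser n Bool) (R : Fin n → Bool) :
    (Finset.univ.filter fun f : Fin n → Bool =>
        resVec a f = R ∧ (Finset.univ.filter fun x => f x = true).card = 1).card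
      = if (Finset.univ.filter fun i => R i = true).card = 1 then 1 else 0 := by
  split_ifs with h
  · obtain ⟨k₀, hk₀⟩ := needle_of_card h
    rw [Finset.card_eq_one]
    refine ⟨needle (zrun a k₀), ?_⟩
    ext f
    simp only [Finset.mem_filter, Finset.mem_univ, true_and, Finset.mem_singleton]
    constructor
    · rintro ⟨hres, hcard⟩
      obtain ⟨x, rfl⟩ := needle_of_card hcard
      obtain ⟨k, rfl⟩ := zrun_surj a x
      rw [resVec_needle, hk₀] at hres
      rw [needle_inj hres]
    · rintro rfl
      exact ⟨by rw [resVec_needle, hk₀], card_filter_needle _⟩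
  · rw [Finset.card_eq_zero]
    ext f
    simp only [Finset.mem_filter, Finset.mem_univ, true_and, Finset.notMem_empty,
      iff_false, not_and]
    intro hres hcard
    obtain ⟨x, rfl⟩ := needle_of_card hcard
    obtain ⟨k, rfl⟩ := zrun_surj a x
    rw [resVec_needle] at hres
    exact h (hres ▸ card_filter_needle k)

end BoolPart




lemma perf_eq_sum_resProb [Fintype Y] [DecidableEq Y] (P : (Fin n → Y) → ℝ)
    (M : (Fin n → Y) → ℝ) (a : Optimiser n Y) :
    perf P M a = ∑ R, resProb P a R * M R := by
  unfold perf resProb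
  rw [← Finset.sum_fiberwise Finset.univ (fun f => resVec a f)
    (fun f => P f * M (resVec a f))]
  refine Finset.sum_congr rfl fun R _ => ?_
  rw [Finset.sum_mul]
  refine Finset.sum_congr rfl fun f hf => ?_
  rw [(Finset.mem_filter.1 hf).2]

lemma resProb_niah (a : Optimiser n Bool) (R : Fin n → Bool) :
    resProb (fun f => if (Finset.univ.filter fun x => f x = true).card = 1
        then 1 / (n : ℝ) else 0) a R
      = if (Finset.univ.filter fun i => R i = true).card = 1 then 1 / (n : ℝ) else 0 := by
  unfold resProb
  rw [← Finset.sum_filter, Finset.filter_filter, Finset.sum_const, key_card]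
  split_ifs <;> simp

theorem niah_nfl {n : ℕ} (hn : 1 ≤ n) :
    (∀ (a b : Optimiser n Bool) (R : Fin n → Bool),
        resProb (fun f => if (Finset.univ.filter fun x => f x = true).card = 1
            then 1 / (n : ℝ) else 0) a R
          = resProb (fun f => if (Finset.univ.filter fun x => f x = true).card = 1
            then 1 / (n : ℝ) else 0) b R) ∧
      NFLholds (fun f : Fin n → Bool =>
        if (Finset.univ.filter fun x => f x = true).card = 1
          then 1 / (n : ℝ) else 0) := by
  constructor
  · intro a b R
    rw [resProb_niah, resProb_niah]
  · intro M _ a b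
    rw [perf_eq_sum_resProb, perf_eq_sum_resProb]
    refine Finset.sum_congr rfl fun R _ => ?_
    rw [resProb_niah, resProb_niah]

end NFL
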